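/- For every real β > 1 and every integer k with k ≥ e^{2/β}·(β+1)², the generalized binomial coefficient satisfies |C(β,k)| ≤ 1. -/

import Mathlib

/-- The generalized binomial coefficient `C(β,k) = β(β−1)⋯(β−k+1)/k!`. -/
noncomputable def genBinom (β : ℝ) (k : ℕ) : ℝ :=
  (∏ j ∈ Finset.range k, (β - j)) / (k.factorial : ℝ)

/-- for `β > 1` and `k ≥ e^{2/β}·(β+1)²`, `|C(β,k)| ≤ 1`. -/
theorem stmt_6 (β : ℝ) (hβ : 1 < β) (k : ℕ)
    (hk : Real.exp (2 / β) * (β + 1) ^ 2 ≤ (k : ℝ)) :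
    |genBinom β k| ≤ 1 := by
  have hβ0 : (0:ℝ) < β := by linarith
  set N : ℕ := ⌊β⌋₊ + 1 with hNdef
  have hNβ : β < N := by
    have := Nat.lt_floor_add_one β
    push_cast [hNdef]; push_cast at this; linarith
  have hNle : (N:ℝ) ≤ β + 1 := by
    have := Nat.floor_le hβ0.le
    push_cast [hNdef]; linarith
  have hexp1 : (1:ℝ) ≤ Real.exp (2 / β) := Real.one_le_exp (by positivity)
  have hk2 : (β + 1) ^ 2 ≤ (k:ℝ) := by nlinarith [sq_nonneg (β + 1)]
  have hNk : N ≤ k := by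
    have : (N:ℝ) ≤ (k:ℝ) := by nlinarith
    exact_mod_cast this
  -- rewrite |genBinom| as product of |(β-j)/(j+1)|
  have hfact : (k.factorial : ℝ) = ∏ j ∈ Finset.range k, ((j:ℝ) + 1) := by
    rw [← Finset.prod_range_add_one_eq_factorial]
    push_cast; rfl
  have habs : |genBinom β k| = ∏ j ∈ Finset.range k, |(β - j) / ((j:ℝ) + 1)| := by
    rw [genBinom, hfact, ← Finset.prod_div_distrib, Finset.abs_prod]
  rw [habs, ← Finset.prod_range_mul_prod_Ico _ hNk]
  -- first block ≤ β ^ N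
  have hfirst : (∏ j ∈ Finset.range N, |(β - j) / ((j:ℝ) + 1)|) ≤ β ^ N := by
    calc (∏ j ∈ Finset.range N, |(β - j) / ((j:ℝ) + 1)|)
        ≤ ∏ _j ∈ Finset.range N, β := by
          apply Finset.prod_le_prod (fun j _ => abs_nonneg _)
          intro j hj
          rw [Finset.mem_range, hNdef, Nat.lt_succ_iff] at hj
          have hjβ : (j:ℝ) ≤ β := by
            have := (Nat.le_floor_iff hβ0.le).mp hj
            exact_mod_cast this
          have h1 : (0:ℝ) < (j:ℝ) + 1 := by positivity
          rw [abs_div, abs_of_nonneg (by linarith : (0:ℝ) ≤ β - j),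
            abs_of_pos h1]
          calc (β - j) / ((j:ℝ) + 1) ≤ β - j :=
                div_le_self (by linarith) (by simp)
            _ ≤ β := by
                have : (0:ℝ) ≤ (j:ℝ) := Nat.cast_nonneg j
                linarith
      _ = β ^ N := by simp
  -- second block: each factor ≤ exp (-(β+1)*(log (j+2) - log (j+1)))
  have hsecond : (∏ j ∈ Finset.Ico N k, |(β - j) / ((j:ℝ) + 1)|) ≤
      ∏ j ∈ Finset.Ico N k,
        Real.exp (-((β + 1) * (Real.log ((j:ℝ) + 2) - Real.log ((j:ℝ) + 1)))) := by
    apply Finset.prod_le_prod (fun j _ => abs_nonneg _)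
    intro j hj
    rw [Finset.mem_Ico] at hj
    have hjN : (N:ℝ) ≤ (j:ℝ) := by exact_mod_cast hj.1
    have hjβ : β < (j:ℝ) := lt_of_lt_of_le hNβ hjN
    have h1 : (0:ℝ) < (j:ℝ) + 1 := by positivity
    have heq : |(β - j) / ((j:ℝ) + 1)| = 1 - (β + 1) / ((j:ℝ) + 1) := by
      rw [abs_div, abs_of_nonpos (by linarith : β - (j:ℝ) ≤ 0), abs_of_pos h1]
      field_simp
      ring
    rw [heq]
    have step1 : 1 - (β + 1) / ((j:ℝ) + 1) ≤ Real.exp (-((β + 1) / ((j:ℝ) + 1))) := by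
      have := Real.add_one_le_exp (-((β + 1) / ((j:ℝ) + 1)))
      linarith
    refine step1.trans (Real.exp_le_exp.mpr ?_)
    rw [neg_le_neg_iff]
    have hlog : Real.log ((j:ℝ) + 2) - Real.log ((j:ℝ) + 1) ≤ 1 / ((j:ℝ) + 1) := by
      have hx : (0:ℝ) < ((j:ℝ) + 2) / ((j:ℝ) + 1) := by positivity
      have := Real.log_le_sub_one_of_pos hx
      rw [Real.log_div (by positivity) (by positivity)] at this
      have : Real.log ((j:ℝ) + 2) - Real.log ((j:ℝ) + 1) ≤
          ((j:ℝ) + 2) / ((j:ℝ) + 1) - 1 := this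
      have heq2 : ((j:ℝ) + 2) / ((j:ℝ) + 1) - 1 = 1 / ((j:ℝ) + 1) := by
        field_simp
        norm_num
      linarith
    have hβ1 : (0:ℝ) ≤ β + 1 := by linarith
    calc (β + 1) * (Real.log ((j:ℝ) + 2) - Real.log ((j:ℝ) + 1))
        ≤ (β + 1) * (1 / ((j:ℝ) + 1)) := by
          exact mul_le_mul_of_nonneg_left hlog hβ1
      _ = (β + 1) / ((j:ℝ) + 1) := by ring
  -- telescoping
  have htel : (∏ j ∈ Finset.Ico N k,
      Real.exp (-((β + 1) * (Real.log ((j:ℝ) + 2) - Real.log ((j:ℝ) + 1))))) =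
      Real.exp (-((β + 1) * (Real.log ((k:ℝ) + 1) - Real.log ((N:ℝ) + 1)))) := by
    rw [← Real.exp_sum]
    congr 1
    have hsum : ∑ j ∈ Finset.Ico N k,
        (Real.log ((j:ℝ) + 2) - Real.log ((j:ℝ) + 1)) =
        Real.log ((k:ℝ) + 1) - Real.log ((N:ℝ) + 1) := by
      have key : ∀ n : ℕ, ∑ j ∈ Finset.range n,
          (Real.log ((j:ℝ) + 2) - Real.log ((j:ℝ) + 1)) =
          Real.log ((n:ℝ) + 1) - Real.log 1 := by
        intro n
        have := Finset.sum_range_sub (fun i : ℕ => Real.log ((i:ℝ) + 1)) n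
        simpa [add_assoc, one_add_one_eq_two] using this
      rw [Finset.sum_Ico_eq_sub _ hNk, key, key]
      ring
    calc ∑ j ∈ Finset.Ico N k,
          -((β + 1) * (Real.log ((j:ℝ) + 2) - Real.log ((j:ℝ) + 1)))
        = -((β + 1) * ∑ j ∈ Finset.Ico N k,
            (Real.log ((j:ℝ) + 2) - Real.log ((j:ℝ) + 1))) := by
          rw [Finset.mul_sum, ← Finset.sum_neg_distrib]
      _ = -((β + 1) * (Real.log ((k:ℝ) + 1) - Real.log ((N:ℝ) + 1))) := by
          rw [hsum]
  -- combine
  have hcomb : (∏ j ∈ Finset.range N, |(β - j) / ((j:ℝ) + 1)|) *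
      (∏ j ∈ Finset.Ico N k, |(β - j) / ((j:ℝ) + 1)|) ≤
      β ^ N * Real.exp (-((β + 1) * (Real.log ((k:ℝ) + 1) - Real.log ((N:ℝ) + 1)))) := by
    apply mul_le_mul hfirst (hsecond.trans_eq htel)
      (Finset.prod_nonneg fun j _ => abs_nonneg _) (by positivity)
  refine hcomb.trans ?_
  have hpow : β ^ N = Real.exp ((N:ℝ) * Real.log β) := by
    rw [Real.exp_nat_mul, Real.exp_log hβ0]
  rw [hpow, ← Real.exp_add, Real.exp_le_one_iff]
  have hlogβ : 0 ≤ Real.log β := Real.log_nonneg hβ.le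
  have hN1 : (0:ℝ) < (N:ℝ) + 1 := by positivity
  have hmul : Real.log β + Real.log ((N:ℝ) + 1) = Real.log (β * ((N:ℝ) + 1)) :=
    (Real.log_mul (by positivity) (by positivity)).symm
  have hle : β * ((N:ℝ) + 1) ≤ (k:ℝ) + 1 := by nlinarith
  have hloglog : Real.log (β * ((N:ℝ) + 1)) ≤ Real.log ((k:ℝ) + 1) :=
    Real.log_le_log (by positivity) hle
  have key2 : Real.log β + Real.log ((N:ℝ) + 1) ≤ Real.log ((k:ℝ) + 1) := by
    rw [hmul]; exact hloglog
  have hNle' : (N:ℝ) * Real.log β ≤ (β + 1) * Real.log β :=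
    mul_le_mul_of_nonneg_right hNle hlogβ
  nlinarith [hNle', key2, hlogβ]
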